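/- Let q = p^e with p prime, 0 ≤ k < e, and let R = F_q^N be the product ring with componentwise operations. For every R-submodule C ⊆ R^n, dim_{F_q}(C) + dim_{F_q}(C^{⊥k,R}) = nN, where C and C^{⊥k,R} are regarded as F_q-vector spaces. -/

import Mathlib

/-- The `k`-Galois dual (as a set) of a set of codewords `C ⊆ R^ι`,
with respect to the inner product `⟨u,v⟩ = ∑ i, u i * (v i)^pk`. -/
def galoisDualSet {R : Type*} [CommRing R] {ι : Type*} [Fintype ι]
    (pk : ℕ) (C : Set (ι → R)) : Set (ι → R) :=
  {v | ∀ c ∈ C, ∑ i, c i * v i ^ pk = 0}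

/-- The dot-product bilinear form on `Fin n → Fin N → F`. -/
def dotForm (F : Type*) [Field F] (n N : ℕ) :
    LinearMap.BilinForm F (Fin n → Fin N → F) :=
  LinearMap.mk₂ F (fun u w => ∑ i, ∑ j, u i j * w i j)
    (by intro u u' w; simp [add_mul, Finset.sum_add_distrib])
    (by intro a u w; simp [Finset.mul_sum, mul_assoc])
    (by intro u w w'; simp [mul_add, Finset.sum_add_distrib])
    (by
      intro a u w
      simp only [Pi.smul_apply, smul_eq_mul, Finset.mul_sum]
      congr 1; ext i; congr 1; ext j; ring)

lemma dotForm_apply {F : Type*} [Field F] {n N : ℕ} (u w : Fin n → Fin N → F) :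
    dotForm F n N u w = ∑ i, ∑ j, u i j * w i j := rfl

lemma dotForm_isRefl (F : Type*) [Field F] (n N : ℕ) : (dotForm F n N).IsRefl := by
  intro u w h
  rw [dotForm_apply] at h ⊢
  rw [← h]
  congr 1; ext i; congr 1; ext j; ring

lemma dotForm_nondegenerate (F : Type*) [Field F] (n N : ℕ) :
    (dotForm F n N).Nondegenerate := by
  constructor <;>
  · intro u hu
    funext i j
    have := hu (Pi.single i (Pi.single j 1))
    rw [dotForm_apply] at this
    simpa [Pi.single_apply, ite_apply, mul_ite, ite_mul, Finset.sum_ite_eq'] using this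

theorem stmt12 {p e k N n : ℕ} (hp : p.Prime) (he : 0 < e) (hk : k < e)
    {F : Type*} [Field F] [Fintype F] (hcard : Fintype.card F = p ^ e)
    (C : Submodule (Fin N → F) (Fin n → Fin N → F)) :
    ∃ D : Submodule F (Fin n → Fin N → F),
      (D : Set (Fin n → Fin N → F)) =
          galoisDualSet (p ^ k) (C : Set (Fin n → Fin N → F)) ∧
        Module.finrank F (C.restrictScalars F) + Module.finrank F D = n * N := by
  classical
  haveI : Fact p.Prime := ⟨hp⟩
  -- F has characteristic p
  haveI : CharP F (ringChar F) := ringChar.charP F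
  obtain ⟨m, hm⟩ := FiniteField.card F (ringChar F)
  have hpchar : p = ringChar F := by
    have hdvd : p ∣ (ringChar F) ^ (m : ℕ) := by
      rw [← hm.2, hcard]
      exact dvd_pow_self p he.ne'
    exact (Nat.prime_dvd_prime_iff_eq hp hm.1).mp (hp.dvd_of_dvd_pow hdvd)
  haveI hcharp : CharP F p := by rw [hpchar]; infer_instance
  haveI : ExpChar F p := ExpChar.prime hp
  -- the Frobenius power ring hom
  set g : F →+* F := iterateFrobenius F p k with hg
  have hgdef : ∀ x : F, g x = x ^ p ^ k := fun x => iterateFrobenius_def p k x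
  have hginj : Function.Injective g := g.injective
  have hgbij : Function.Bijective g := ⟨hginj, Finite.surjective_of_injective hginj⟩
  set V := Fin n → Fin N → F with hV
  set B := dotForm F n N with hB
  set C' : Submodule F V := C.restrictScalars F with hC'
  set W : Submodule F V := B.orthogonal C' with hW
  set D : Submodule F V :=
    { carrier := {v : V | (fun i j => g (v i j)) ∈ W}
      zero_mem' := by
        have h0 : (fun (i : Fin n) (j : Fin N) => g ((0 : V) i j)) = (0 : V) := by
          funext i j; exact map_zero g
        show (fun (i : Fin n) (j : Fin N) => g ((0 : V) i j)) ∈ W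
        rw [h0]; exact W.zero_mem
      add_mem' := by
        intro u v hu hv
        have hadd : (fun (i : Fin n) (j : Fin N) => g ((u + v) i j)) =
            (fun i j => g (u i j)) + (fun i j => g (v i j)) := by
          funext i j; exact map_add g (u i j) (v i j)
        show (fun (i : Fin n) (j : Fin N) => g ((u + v) i j)) ∈ W
        rw [hadd]; exact W.add_mem hu hv
      smul_mem' := by
        intro a v hv
        have hsm : (fun (i : Fin n) (j : Fin N) => g ((a • v) i j)) =
            g a • (fun i j => g (v i j)) := by
          funext i j; exact map_mul g a (v i j)
        show (fun (i : Fin n) (j : Fin N) => g ((a • v) i j)) ∈ W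
        rw [hsm]; exact W.smul_mem _ hv } with hD
  have hmemD : ∀ v : V, v ∈ D ↔ (fun i j => g (v i j)) ∈ W := fun _ => Iff.rfl
  refine ⟨D, ?_, ?_⟩
  · -- set equality with the Galois dual
    ext v
    rw [SetLike.mem_coe, hmemD, hW, LinearMap.BilinForm.mem_orthogonal_iff]
    constructor
    · intro h c hc
      show (∑ i, c i * v i ^ p ^ k) = 0
      funext j
      -- use the codeword (indicator of j) • c ∈ C
      have hc' : ((fun j' : Fin N => if j' = j then (1:F) else 0) • c) ∈ C' := by
        rw [hC', Submodule.restrictScalars_mem]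
        exact C.smul_mem _ hc
      have h2 := h _ hc'
      rw [dotForm_apply] at h2
      simp only [Pi.smul_apply, smul_eq_mul, Pi.mul_apply, ite_mul, one_mul, zero_mul,
        Finset.sum_ite_eq', Finset.mem_univ, if_true] at h2
      calc (∑ i, c i * v i ^ p ^ k) j
          = ∑ i, c i j * g (v i j) := by
            simp [Finset.sum_apply, hgdef]
        _ = 0 := h2
    · intro h c hc
      rw [dotForm_apply]
      have hcC : c ∈ C := by rwa [hC', Submodule.restrictScalars_mem] at hc
      have hj : ∀ j, ∑ i, c i j * g (v i j) = 0 := by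
        intro j
        have := congrFun (h c hcC) j
        simpa [Finset.sum_apply, hgdef] using this
      rw [Finset.sum_comm]
      simp [hj]
  · -- dimension count
    haveI : FiniteDimensional F V := by infer_instance
    -- bijection between D and W
    set ψ : V ≃ V :=
      Equiv.piCongrRight (fun _ : Fin n =>
        Equiv.piCongrRight (fun _ : Fin N => Equiv.ofBijective g hgbij)) with hψ
    show Module.finrank F C' + Module.finrank F D = n * N
    have eDW : D ≃ W := Equiv.subtypeEquiv ψ (fun v => Iff.rfl)
    haveI : Fintype D := Fintype.ofFinite _
    haveI : Fintype W := Fintype.ofFinite _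
    have hcardDW : Fintype.card D = Fintype.card W := Fintype.card_congr eDW
    have hcD : Fintype.card D = Fintype.card F ^ Module.finrank F D :=
      Module.card_eq_pow_finrank
    have hcW : Fintype.card W = Fintype.card F ^ Module.finrank F W :=
      Module.card_eq_pow_finrank
    have h2 : 2 ≤ Fintype.card F := Fintype.one_lt_card
    have hpow : Fintype.card F ^ Module.finrank F D = Fintype.card F ^ Module.finrank F W := by
      rw [← hcD, ← hcW, hcardDW]
    have hfrDW : Module.finrank F D = Module.finrank F W :=
      Nat.pow_right_injective h2 hpow
    have hVfr : Module.finrank F V = n * N := by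
      show Module.finrank F (Fin n → Fin N → F) = n * N
      simp [Module.finrank_pi_fintype, Module.finrank_pi]
    have horth : Module.finrank F W = Module.finrank F V - Module.finrank F C' :=
      LinearMap.BilinForm.finrank_orthogonal (dotForm_nondegenerate F n N)
        C'
    have hle : Module.finrank F C' ≤ Module.finrank F V := Submodule.finrank_le C'
    omega
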